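/- arXiv:2602.18219 — 2 statements merged into one kernel-verified Lean document; each statement's English description precedes it below -/
import Mathlib

section
/- Let K : ℝ² → (0,∞) satisfy λ|z|^{-2-α} ≤ K(z) ≤ Λ|z|^{-2-α} with 0 < λ ≤ Λ, α ∈ (0,1). Fix R > 0 and define for integers k ≥ 1: μ_k = ∫_ℝ (1 − cos(kt)) K(t, 0) dt − ∫_ℝ (1 + cos(kt)) K(t, 2R) dt. Then 0 < liminf_{k→∞} μ_k / k^{1+α} and limsup_{k→∞} μ_k / k^{1+α} < ∞; more precisely liminf μ_k/k^{1+α} ≥ λ ∫_ℝ (1 − cos t)|t|^{-2-α} dt and limsup μ_k/k^{1+α} ≤ Λ ∫_ℝ (1 − cos t)|t|^{-2-α} dt. -/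
open MeasureTheory Real Filter

open Set Topology

-- even-function integrability transfer
lemma my_integrable_comp_abs {f : ℝ → ℝ} (hf : IntegrableOn f (Set.Ioi 0)) :
    Integrable fun x : ℝ => f |x| := by
  have int_Ioi : IntegrableOn (fun x : ℝ => f |x|) (Ioi 0) := by
    apply hf.congr_fun (fun x hx => ?_) measurableSet_Ioi
    rw [abs_of_pos hx]
  have int_Iic : IntegrableOn (fun x : ℝ => f |x|) (Iic 0) := by
    rw [← Measure.map_neg_eq_self (volume : Measure ℝ)]
    let m : MeasurableEmbedding fun x : ℝ => -x :=
      (Homeomorph.neg ℝ).measurableEmbedding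
    rw [m.integrableOn_map_iff]
    simp_rw [Function.comp_def, abs_neg, neg_preimage, neg_Iic, neg_zero]
    exact Iff.mpr integrableOn_Ici_iff_integrableOn_Ioi int_Ioi
  have := int_Iic.union int_Ioi
  rwa [Iic_union_Ioi, integrableOn_univ] at this

lemma my_g_integrableOn {α : ℝ} (h0 : 0 < α) (h1 : α < 1) :
    IntegrableOn (fun s : ℝ => (1 - Real.cos s) * s ^ (-(2:ℝ) - α)) (Set.Ioi 0) := by
  have hmeas : Measurable fun s : ℝ => (1 - Real.cos s) * s ^ (-(2:ℝ) - α) :=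
    (measurable_const.sub Real.measurable_cos).mul (measurable_id.pow_const _)
  have h01 : IntegrableOn (fun s : ℝ => (1 - Real.cos s) * s ^ (-(2:ℝ) - α)) (Ioc 0 1) := by
    have hint : IntegrableOn (fun s : ℝ => s ^ (-α)) (Ioc 0 1) := by
      rw [integrableOn_Ioc_iff_integrableOn_Ioo]
      exact (intervalIntegral.integrableOn_Ioo_rpow_iff one_pos).mpr (by linarith)
    refine Integrable.mono' hint hmeas.aestronglyMeasurable ?_
    rw [ae_restrict_iff' measurableSet_Ioc]
    refine Filter.Eventually.of_forall (fun s hs => ?_)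
    obtain ⟨hs0, hs1⟩ := hs
    have hcos : 1 - Real.cos s ≤ s ^ (2:ℕ) := by
      have := Real.one_sub_sq_div_two_le_cos (x := s); nlinarith
    have hcos0 : 0 ≤ 1 - Real.cos s := by nlinarith [Real.cos_le_one s]
    have hrp : (0:ℝ) ≤ s ^ (-(2:ℝ) - α) := Real.rpow_nonneg hs0.le _
    rw [Real.norm_eq_abs, abs_of_nonneg (mul_nonneg hcos0 hrp)]
    calc (1 - Real.cos s) * s ^ (-(2:ℝ) - α) ≤ s ^ (2:ℕ) * s ^ (-(2:ℝ) - α) := by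
          exact mul_le_mul_of_nonneg_right hcos hrp
      _ = s ^ (-α) := by
          rw [← Real.rpow_natCast s 2, ← Real.rpow_add hs0]
          congr 1; ring
  have h1i : IntegrableOn (fun s : ℝ => (1 - Real.cos s) * s ^ (-(2:ℝ) - α)) (Ioi 1) := by
    have hint : IntegrableOn (fun s : ℝ => 2 * s ^ (-(2:ℝ) - α)) (Ioi 1) := by
      refine Integrable.const_mul ?_ 2
      exact (integrableOn_Ioi_rpow_iff one_pos).mpr (by linarith)
    refine Integrable.mono' hint hmeas.aestronglyMeasurable ?_
    rw [ae_restrict_iff' measurableSet_Ioi]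
    refine Filter.Eventually.of_forall (fun s hs => ?_)
    have hs0 : (0:ℝ) < s := lt_trans one_pos hs
    have hcos : 1 - Real.cos s ≤ 2 := by nlinarith [Real.neg_one_le_cos s]
    have hcos0 : 0 ≤ 1 - Real.cos s := by nlinarith [Real.cos_le_one s]
    have hrp : (0:ℝ) ≤ s ^ (-(2:ℝ) - α) := Real.rpow_nonneg hs0.le _
    rw [Real.norm_eq_abs, abs_of_nonneg (mul_nonneg hcos0 hrp)]
    exact mul_le_mul_of_nonneg_right hcos hrp
  have := h01.union h1i
  rwa [Ioc_union_Ioi_eq_Ioi (le_of_lt one_pos)] at this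

lemma my_g_integrable {α : ℝ} (h0 : 0 < α) (h1 : α < 1) :
    Integrable fun t : ℝ => (1 - Real.cos t) * |t| ^ (-(2:ℝ) - α) := by
  have := my_integrable_comp_abs (my_g_integrableOn h0 h1)
  refine this.congr (Filter.Eventually.of_forall (fun t => ?_))
  simp [Real.cos_abs]

lemma my_h_integrable {α c : ℝ} (h0 : 0 < α) (h1 : α < 1) (hc : 0 < c) :
    Integrable fun t : ℝ => (Real.sqrt (t ^ 2 + c ^ 2)) ^ (-(2:ℝ) - α) := by
  have key : IntegrableOn (fun s : ℝ => (Real.sqrt (s ^ 2 + c ^ 2)) ^ (-(2:ℝ) - α)) (Ioi 0) := by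
    have hmeas : Measurable fun s : ℝ => (Real.sqrt (s ^ 2 + c ^ 2)) ^ (-(2:ℝ) - α) :=
      (Real.continuous_sqrt.measurable.comp ((measurable_id.pow_const 2).add_const _)).pow_const _
    have h01 : IntegrableOn (fun s : ℝ => (Real.sqrt (s ^ 2 + c ^ 2)) ^ (-(2:ℝ) - α))
        (Ioc 0 1) := by
      apply (ContinuousOn.integrableOn_compact isCompact_Icc ?_).mono_set Ioc_subset_Icc_self
      refine ContinuousOn.rpow_const ?_ (fun x _ => Or.inl ?_)
      · exact ((continuous_pow 2).add continuous_const).continuousOn.sqrt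
      · positivity
    have h1i : IntegrableOn (fun s : ℝ => (Real.sqrt (s ^ 2 + c ^ 2)) ^ (-(2:ℝ) - α))
        (Ioi 1) := by
      have hint : IntegrableOn (fun s : ℝ => s ^ (-(2:ℝ) - α)) (Ioi 1) :=
        (integrableOn_Ioi_rpow_iff one_pos).mpr (by linarith)
      refine Integrable.mono' hint hmeas.aestronglyMeasurable ?_
      rw [ae_restrict_iff' measurableSet_Ioi]
      refine Filter.Eventually.of_forall (fun s hs => ?_)
      have hs0 : (0:ℝ) < s := lt_trans one_pos hs
      have hle : s ≤ Real.sqrt (s ^ 2 + c ^ 2) := by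
        have h2 : Real.sqrt (s ^ 2) ≤ Real.sqrt (s ^ 2 + c ^ 2) :=
          Real.sqrt_le_sqrt (by nlinarith)
        rwa [Real.sqrt_sq hs0.le] at h2
      rw [Real.norm_eq_abs, abs_of_nonneg (Real.rpow_nonneg (Real.sqrt_nonneg _) _)]
      exact Real.rpow_le_rpow_of_nonpos hs0 hle (by linarith)
    have := h01.union h1i
    rwa [Ioc_union_Ioi_eq_Ioi (le_of_lt one_pos)] at this
  have := my_integrable_comp_abs key
  refine this.congr (Filter.Eventually.of_forall (fun t => ?_))
  simp [sq_abs]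

lemma my_g_pos {α : ℝ} (h0 : 0 < α) (h1 : α < 1) :
    0 < ∫ t : ℝ, (1 - Real.cos t) * |t| ^ (-(2:ℝ) - α) := by
  have hint := my_g_integrable h0 h1
  have hnn : ∀ t : ℝ, 0 ≤ (1 - Real.cos t) * |t| ^ (-(2:ℝ) - α) := fun t =>
    mul_nonneg (by nlinarith [Real.cos_le_one t]) (Real.rpow_nonneg (abs_nonneg t) _)
  rw [integral_pos_iff_support_of_nonneg_ae (Filter.Eventually.of_forall hnn) hint]
  have hsub : Ioo (0:ℝ) 1 ⊆ Function.support
      fun t : ℝ => (1 - Real.cos t) * |t| ^ (-(2:ℝ) - α) := by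
    intro t ht
    have ht0 := ht.1
    have hcos : Real.cos t < 1 := by
      rcases lt_or_eq_of_le (Real.cos_le_one t) with h | h
      · exact h
      · exfalso
        have hpi := Real.pi_gt_three
        have := (Real.cos_eq_one_iff_of_lt_of_lt
          (by linarith [ht.1, ht.2] : -(2 * Real.pi) < t)
          (by linarith [ht.2] : t < 2 * Real.pi)).mp h
        linarith [ht.1]
    have : 0 < (1 - Real.cos t) * |t| ^ (-(2:ℝ) - α) := by
      apply mul_pos (by linarith)
      exact Real.rpow_pos_of_pos (abs_pos.mpr ht0.ne') _
    exact fun hzero => this.ne' hzero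
  calc (0:ENNReal) < volume (Ioo (0:ℝ) 1) := by simp [Real.volume_Ioo]
    _ ≤ _ := measure_mono hsub

lemma my_scale {α : ℝ} (h0 : 0 < α) (k : ℝ) (hk : 0 < k) :
    ∫ t : ℝ, (1 - Real.cos (k * t)) * |t| ^ (-(2:ℝ) - α)
      = k ^ ((1:ℝ) + α) * ∫ t : ℝ, (1 - Real.cos t) * |t| ^ (-(2:ℝ) - α) := by
  have step1 : ∀ t : ℝ, (1 - Real.cos (k * t)) * |t| ^ (-(2:ℝ) - α)
      = k ^ ((2:ℝ) + α) * ((1 - Real.cos (k * t)) * |k * t| ^ (-(2:ℝ) - α)) := by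
    intro t
    have : |k * t| ^ (-(2:ℝ) - α) = k ^ (-(2:ℝ) - α) * |t| ^ (-(2:ℝ) - α) := by
      rw [abs_mul, abs_of_pos hk, Real.mul_rpow hk.le (abs_nonneg t)]
    rw [this]
    have hkk : k ^ ((2:ℝ) + α) * k ^ (-(2:ℝ) - α) = 1 := by
      rw [← Real.rpow_add hk]; simp
    linear_combination (-(1 - Real.cos (k * t)) * |t| ^ (-(2:ℝ) - α)) * hkk
  simp_rw [step1]
  rw [integral_const_mul, Measure.integral_comp_mul_left
    (fun t => (1 - Real.cos t) * |t| ^ (-(2:ℝ) - α)) k]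
  rw [abs_of_pos (inv_pos.mpr hk), smul_eq_mul, ← mul_assoc]
  congr 1
  rw [← Real.rpow_neg_one k, ← Real.rpow_add hk]
  congr 1; ring

lemma my_gk_integrable {α : ℝ} (h0 : 0 < α) (h1 : α < 1) (k : ℝ) (hk : 0 < k) :
    Integrable fun t : ℝ => (1 - Real.cos (k * t)) * |t| ^ (-(2:ℝ) - α) := by
  have h2 : Integrable fun t : ℝ =>
      (1 - Real.cos (k * t)) * |k * t| ^ (-(2:ℝ) - α) :=
    (integrable_comp_mul_left_iff
      (fun t : ℝ => (1 - Real.cos t) * |t| ^ (-(2:ℝ) - α)) hk.ne').mpr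
      (my_g_integrable h0 h1)
  refine (h2.const_mul (k ^ ((2:ℝ) + α))).congr
    (Filter.Eventually.of_forall (fun t => ?_))
  show k ^ ((2:ℝ) + α) * ((1 - Real.cos (k * t)) * |k * t| ^ (-(2:ℝ) - α))
      = (1 - Real.cos (k * t)) * |t| ^ (-(2:ℝ) - α)
  have habs : |k * t| ^ (-(2:ℝ) - α) = k ^ (-(2:ℝ) - α) * |t| ^ (-(2:ℝ) - α) := by
    rw [abs_mul, abs_of_pos hk, Real.mul_rpow hk.le (abs_nonneg t)]
  have hkk : k ^ ((2:ℝ) + α) * k ^ (-(2:ℝ) - α) = 1 := by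
    rw [← Real.rpow_add hk]; simp
  rw [habs]
  linear_combination ((1 - Real.cos (k * t)) * |t| ^ (-(2:ℝ) - α)) * hkk

theorem stmt12 (α lam Λ R : ℝ) (hα : α ∈ Set.Ioo (0:ℝ) 1) (hlam : 0 < lam)
    (hΛ : 0 < Λ) (hle : lam ≤ Λ) (hR : 0 < R)
    (K : ℝ × ℝ → ℝ) (hKmeas : Measurable K)
    (hlower : ∀ z : ℝ × ℝ, z ≠ 0 →
      lam * (Real.sqrt (z.1 ^ 2 + z.2 ^ 2)) ^ (-(2:ℝ) - α) ≤ K z)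
    (hupper : ∀ z : ℝ × ℝ, z ≠ 0 →
      K z ≤ Λ * (Real.sqrt (z.1 ^ 2 + z.2 ^ 2)) ^ (-(2:ℝ) - α))
    (μ : ℕ → ℝ)
    (hμ : ∀ k : ℕ, μ k = (∫ t : ℝ, (1 - Real.cos ((k : ℝ) * t)) * K (t, 0)) -
      ∫ t : ℝ, (1 + Real.cos ((k : ℝ) * t)) * K (t, 2 * R)) :
    0 < ∫ t : ℝ, (1 - Real.cos t) * |t| ^ (-(2:ℝ) - α) ∧
    lam * (∫ t : ℝ, (1 - Real.cos t) * |t| ^ (-(2:ℝ) - α)) ≤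
      liminf (fun k : ℕ => μ k / (k : ℝ) ^ ((1:ℝ) + α)) atTop ∧
    limsup (fun k : ℕ => μ k / (k : ℝ) ^ ((1:ℝ) + α)) atTop ≤
      Λ * ∫ t : ℝ, (1 - Real.cos t) * |t| ^ (-(2:ℝ) - α) := by
  obtain ⟨hα0, hα1⟩ := hα
  set I := ∫ t : ℝ, (1 - Real.cos t) * |t| ^ (-(2:ℝ) - α) with hI
  have hIpos : 0 < I := my_g_pos hα0 hα1
  have hhint : Integrable fun t : ℝ => (Real.sqrt (t ^ 2 + (2*R) ^ 2)) ^ (-(2:ℝ) - α) :=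
    my_h_integrable hα0 hα1 (by linarith)
  set C := 2 * Λ * ∫ t : ℝ, (Real.sqrt (t ^ 2 + (2*R) ^ 2)) ^ (-(2:ℝ) - α) with hC
  have hHnn : 0 ≤ ∫ t : ℝ, (Real.sqrt (t ^ 2 + (2*R) ^ 2)) ^ (-(2:ℝ) - α) :=
    integral_nonneg fun t => Real.rpow_nonneg (Real.sqrt_nonneg _) _
  have hCnn : 0 ≤ C := mul_nonneg (by linarith) hHnn
  have hae : ∀ᵐ t : ℝ, t ≠ (0:ℝ) := by
    rw [ae_iff]
    simp only [ne_eq, not_not, Set.setOf_eq_eq_singleton]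
    exact measure_singleton 0
  have key : ∀ k : ℕ, 1 ≤ k →
      lam * ((k:ℝ) ^ ((1:ℝ) + α) * I) - C ≤ μ k ∧
      μ k ≤ Λ * ((k:ℝ) ^ ((1:ℝ) + α) * I) := by
    intro k hk
    have hkpos : (0:ℝ) < (k:ℝ) := by exact_mod_cast hk
    set gk := fun t : ℝ => (1 - Real.cos ((k:ℝ) * t)) * |t| ^ (-(2:ℝ) - α) with hgk
    have hgk_int : Integrable gk := my_gk_integrable hα0 hα1 _ hkpos
    have hgk_nn : ∀ t, 0 ≤ gk t := fun t =>
      mul_nonneg (by nlinarith [Real.cos_le_one ((k:ℝ) * t)])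
        (Real.rpow_nonneg (abs_nonneg t) _)
    have hscale : ∫ t, gk t = (k:ℝ) ^ ((1:ℝ) + α) * I := my_scale hα0 _ hkpos
    set fk := fun t : ℝ => (1 - Real.cos ((k:ℝ) * t)) * K (t, 0) with hfk
    have hfk_meas : AEStronglyMeasurable fk volume :=
      ((measurable_const.sub (Real.measurable_cos.comp
        (measurable_id.const_mul _))).mul
        (hKmeas.comp (measurable_id.prodMk measurable_const))).aestronglyMeasurable
    have hpt : ∀ t : ℝ, t ≠ 0 →
        lam * |t| ^ (-(2:ℝ) - α) ≤ K (t, 0) ∧ K (t, 0) ≤ Λ * |t| ^ (-(2:ℝ) - α) := by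
      intro t ht
      have hz : ((t, (0:ℝ)) : ℝ × ℝ) ≠ 0 := by
        intro h; exact ht (by simpa using congrArg Prod.fst h)
      have hs : Real.sqrt (t ^ 2 + (0:ℝ) ^ 2) = |t| := by
        rw [show (0:ℝ) ^ 2 = 0 by norm_num, add_zero, Real.sqrt_sq_eq_abs]
      constructor
      · have := hlower (t, 0) hz; rwa [hs] at this
      · have := hupper (t, 0) hz; rwa [hs] at this
    have hKpos : ∀ t : ℝ, t ≠ 0 → 0 < K (t, 0) := fun t ht =>
      lt_of_lt_of_le
        (mul_pos hlam (Real.rpow_pos_of_pos (abs_pos.mpr ht) _)) (hpt t ht).1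
    have hcosnn : ∀ t : ℝ, 0 ≤ 1 - Real.cos ((k:ℝ) * t) := fun t => by
      nlinarith [Real.cos_le_one ((k:ℝ) * t)]
    -- upper bound for A
    have hA_up : ∫ t, fk t ≤ Λ * ((k:ℝ) ^ ((1:ℝ) + α) * I) := by
      have h := integral_mono_of_nonneg
        (f := fk) (g := fun t => Λ * gk t)
        (hae.mono fun t ht => mul_nonneg (hcosnn t) (hKpos t ht).le)
        (hgk_int.const_mul Λ)
        (hae.mono fun t ht =>
          mul_le_mul_of_nonneg_left ((hpt t ht).2) (hcosnn t) |>.trans_eq (by ring))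
      rwa [integral_const_mul, hscale] at h
    -- integrability of fk
    have hfk_int : Integrable fk := by
      refine Integrable.mono' (hgk_int.const_mul Λ) hfk_meas
        (hae.mono fun t ht => ?_)
      rw [Real.norm_eq_abs, abs_of_nonneg (mul_nonneg (hcosnn t) (hKpos t ht).le)]
      exact (mul_le_mul_of_nonneg_left ((hpt t ht).2) (hcosnn t)).trans_eq (by ring)
    -- lower bound for A
    have hA_lo : lam * ((k:ℝ) ^ ((1:ℝ) + α) * I) ≤ ∫ t, fk t := by
      have h := integral_mono_of_nonneg
        (f := fun t => lam * gk t) (g := fk)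
        (Filter.Eventually.of_forall fun t => mul_nonneg hlam.le (hgk_nn t))
        hfk_int
        (hae.mono fun t ht =>
          (mul_le_mul_of_nonneg_left ((hpt t ht).1) (hcosnn t)).trans_eq (by ring)
            |>.trans_eq' (by ring))
      rwa [integral_const_mul, hscale] at h
    -- bounds for B
    have hBpt : ∀ t : ℝ,
        lam * (Real.sqrt (t ^ 2 + (2*R) ^ 2)) ^ (-(2:ℝ) - α) ≤ K (t, 2*R) ∧
        K (t, 2*R) ≤ Λ * (Real.sqrt (t ^ 2 + (2*R) ^ 2)) ^ (-(2:ℝ) - α) := by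
      intro t
      have hz : ((t, 2*R) : ℝ × ℝ) ≠ 0 := by
        intro h
        have : (2*R : ℝ) = 0 := by simpa using congrArg Prod.snd h
        linarith
      exact ⟨hlower (t, 2*R) hz, hupper (t, 2*R) hz⟩
    have hKB_pos : ∀ t : ℝ, 0 < K (t, 2*R) := fun t => by
      refine lt_of_lt_of_le ?_ (hBpt t).1
      have : 0 < Real.sqrt (t ^ 2 + (2*R) ^ 2) := Real.sqrt_pos.mpr (by positivity)
      positivity
    have hB_nn : 0 ≤ ∫ t : ℝ, (1 + Real.cos ((k:ℝ) * t)) * K (t, 2*R) :=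
      integral_nonneg fun t => mul_nonneg
        (by nlinarith [Real.neg_one_le_cos ((k:ℝ) * t)]) (hKB_pos t).le
    have hB_up : ∫ t : ℝ, (1 + Real.cos ((k:ℝ) * t)) * K (t, 2*R) ≤ C := by
      have h := integral_mono_of_nonneg
        (f := fun t : ℝ => (1 + Real.cos ((k:ℝ) * t)) * K (t, 2*R))
        (g := fun t : ℝ => (2 * Λ) * (Real.sqrt (t ^ 2 + (2*R) ^ 2)) ^ (-(2:ℝ) - α))
        (Filter.Eventually.of_forall fun t => mul_nonneg
          (by nlinarith [Real.neg_one_le_cos ((k:ℝ) * t)]) (hKB_pos t).le)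
        (hhint.const_mul (2 * Λ))
        (Filter.Eventually.of_forall fun t => ?_)
      · rw [hC]
        simpa [integral_const_mul] using h
      · calc (1 + Real.cos ((k:ℝ) * t)) * K (t, 2*R)
            ≤ 2 * (Λ * (Real.sqrt (t ^ 2 + (2*R) ^ 2)) ^ (-(2:ℝ) - α)) := by
              apply mul_le_mul
              · nlinarith [Real.cos_le_one ((k:ℝ) * t)]
              · exact (hBpt t).2
              · exact (hKB_pos t).le
              · norm_num
          _ = (2 * Λ) * (Real.sqrt (t ^ 2 + (2*R) ^ 2)) ^ (-(2:ℝ) - α) := by ring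
    have hμk := hμ k
    constructor
    · rw [hμk]; linarith
    · rw [hμk]; linarith
  -- filter arguments
  have hUB : ∀ᶠ k : ℕ in atTop, μ k / (k:ℝ) ^ ((1:ℝ) + α) ≤ Λ * I := by
    filter_upwards [eventually_ge_atTop 1] with k hk
    have hk1 : (1:ℝ) ≤ (k:ℝ) := by exact_mod_cast hk
    have hkpos : (0:ℝ) < (k:ℝ) ^ ((1:ℝ) + α) := Real.rpow_pos_of_pos (by linarith) _
    rw [div_le_iff₀ hkpos]
    calc μ k ≤ Λ * ((k:ℝ) ^ ((1:ℝ) + α) * I) := (key k hk).2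
      _ = Λ * I * (k:ℝ) ^ ((1:ℝ) + α) := by ring
  have hLB : ∀ᶠ k : ℕ in atTop,
      lam * I - C / (k:ℝ) ^ ((1:ℝ) + α) ≤ μ k / (k:ℝ) ^ ((1:ℝ) + α) := by
    filter_upwards [eventually_ge_atTop 1] with k hk
    have hk1 : (1:ℝ) ≤ (k:ℝ) := by exact_mod_cast hk
    have hkpos : (0:ℝ) < (k:ℝ) ^ ((1:ℝ) + α) := Real.rpow_pos_of_pos (by linarith) _
    rw [le_div_iff₀ hkpos]
    calc (lam * I - C / (k:ℝ) ^ ((1:ℝ) + α)) * (k:ℝ) ^ ((1:ℝ) + α)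
        = lam * ((k:ℝ) ^ ((1:ℝ) + α) * I) - C := by field_simp
      _ ≤ μ k := (key k hk).1
  have hLB' : ∀ᶠ k : ℕ in atTop, lam * I - C ≤ μ k / (k:ℝ) ^ ((1:ℝ) + α) := by
    filter_upwards [hLB, eventually_ge_atTop 1] with k h hk
    have hk1 : (1:ℝ) ≤ (k:ℝ) := by exact_mod_cast hk
    have hk1' : (1:ℝ) ≤ (k:ℝ) ^ ((1:ℝ) + α) := Real.one_le_rpow hk1 (by linarith)
    have : C / (k:ℝ) ^ ((1:ℝ) + α) ≤ C := div_le_self hCnn hk1'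
    linarith
  have hbdd : IsBoundedUnder (· ≥ ·) atTop
      (fun k : ℕ => μ k / (k:ℝ) ^ ((1:ℝ) + α)) :=
    isBoundedUnder_of_eventually_ge hLB'
  refine ⟨hIpos, ?_, ?_⟩
  · have hw : Tendsto (fun k : ℕ => lam * I - C / (k:ℝ) ^ ((1:ℝ) + α)) atTop
        (𝓝 (lam * I)) := by
      have h1 : Tendsto (fun k : ℕ => (k:ℝ) ^ ((1:ℝ) + α)) atTop atTop :=
        (tendsto_rpow_atTop (by linarith)).comp tendsto_natCast_atTop_atTop
      have h2 : Tendsto (fun k : ℕ => C / (k:ℝ) ^ ((1:ℝ) + α)) atTop (𝓝 0) :=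
        Tendsto.div_atTop tendsto_const_nhds h1
      simpa using tendsto_const_nhds.sub h2
    calc lam * I
        = liminf (fun k : ℕ => lam * I - C / (k:ℝ) ^ ((1:ℝ) + α)) atTop :=
          (hw.liminf_eq).symm
      _ ≤ liminf (fun k : ℕ => μ k / (k:ℝ) ^ ((1:ℝ) + α)) atTop :=
          liminf_le_liminf hLB hw.isBoundedUnder_ge
            ((isBoundedUnder_of_eventually_le hUB).isCoboundedUnder_ge)
  · exact limsup_le_of_le (hbdd.isCoboundedUnder_le) hUB
end

section
/- Let E ⊂ ℝⁿ be 2π-periodic in x₁ and of the form E = {x : |x'| < u(x₁)} for a nonnegative measurable 2π-periodic function u, and suppose K(x) ≥ λ|x|^{−n−α} for some λ > 0, α ∈ (0,1). If P_K[E] < ∞, then the function u^{n−1} belongs to the fractional Sobolev space W^{α,1}(−π, π); in fact [u^{n−1}]_{W^{α,1}(−π,π)} ≤ C_{n,α}(1 + (1/λ) P_K[E]) for a constant C_{n,α} depending only on n and α. -/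
open MeasureTheory Set Real
open scoped ENNReal

/-- The periodic anisotropic nonlocal perimeter
`P_K[E] = ∫_{E ∩ Ω} ∫_{Eᶜ} K(x - y) dx dy`, with `Ω = {x : -π < x₁ < π}`. -/
noncomputable def perK {m : ℕ} (K : ℝ × EuclideanSpace ℝ (Fin m) → ℝ)
    (E : Set (ℝ × EuclideanSpace ℝ (Fin m))) : ℝ≥0∞ :=
  ∫⁻ x in E ∩ {x : ℝ × EuclideanSpace ℝ (Fin m) | -π < x.1 ∧ x.1 < π},
    ∫⁻ y in Eᶜ, ENNReal.ofReal (K (x - y))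

open Metric
open scoped RealInnerProductSpace

lemma halfspace_bound (m : ℕ) (hm : 1 ≤ m) (α : ℝ) (hα : 0 < α)
    (r : ℝ) (hr : 0 < r) (e p : EuclideanSpace ℝ (Fin m)) (he : ‖e‖ = 1)
    (d : ℝ) (hd : d ≤ ⟪p, e⟫) :
    ENNReal.ofReal ((volume (ball (0 : EuclideanSpace ℝ (Fin m)) 1)).toReal
        * ((2:ℝ) ^ (-(m:ℝ)) * (Real.sqrt 2) ^ (-((m:ℝ)+1) - α)) * r ^ (-(1:ℝ) - α))
      ≤ ∫⁻ y in {y : EuclideanSpace ℝ (Fin m) | d ≤ ⟪y, e⟫},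
          ENNReal.ofReal ((Real.sqrt (r^2 + ‖p - y‖^2)) ^ (-((m:ℝ)+1) - α)) := by
  haveI : Nontrivial (EuclideanSpace ℝ (Fin m)) := by
    apply Module.nontrivial_of_finrank_pos (R := ℝ)
    rw [finrank_euclideanSpace_fin]; omega
  set s : ℝ := -((m:ℝ)+1) - α with hs_def
  have hs : s ≤ 0 := by
    have : (0:ℝ) ≤ (m:ℝ) + 1 := by positivity
    simp only [hs_def]; linarith
  set c : EuclideanSpace ℝ (Fin m) := p + (r/2) • e with hc_def
  have hsub : ball c (r/2) ⊆ {y : EuclideanSpace ℝ (Fin m) | d ≤ ⟪y, e⟫} := by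
    intro y hy
    have habs : |⟪y - c, e⟫| ≤ ‖y - c‖ := by
      have := abs_real_inner_le_norm (y - c) e
      rwa [he, mul_one] at this
    have hnorm : ‖y - c‖ < r/2 := by simpa [dist_eq_norm] using hy
    have h1 : -(r/2) ≤ ⟪y - c, e⟫ := by
      have := neg_abs_le (⟪y - c, e⟫)
      linarith
    have h2 : ⟪c, e⟫ = ⟪p, e⟫ + r/2 := by
      rw [hc_def, inner_add_left, real_inner_smul_left, real_inner_self_eq_norm_sq, he]
      ring
    have h3 : ⟪y, e⟫ = ⟪y - c, e⟫ + ⟪c, e⟫ := by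
      rw [← inner_add_left, sub_add_cancel]
    rw [Set.mem_setOf_eq, h3, h2]
    linarith
  have hball_le : ∀ y ∈ ball c (r/2),
      ENNReal.ofReal ((Real.sqrt 2 * r) ^ s)
        ≤ ENNReal.ofReal ((Real.sqrt (r^2 + ‖p - y‖^2)) ^ s) := by
    intro y hy
    apply ENNReal.ofReal_le_ofReal
    have hnorm : ‖p - y‖ < r := by
      have h1 : ‖y - c‖ < r/2 := by simpa [dist_eq_norm] using hy
      have h2 : ‖p - y‖ ≤ ‖p - c‖ + ‖c - y‖ := norm_sub_le_norm_sub_add_norm_sub p c y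
      have h3 : ‖p - c‖ = r/2 := by
        rw [hc_def]; simp [norm_smul, abs_of_pos hr, he]
      have h4 : ‖c - y‖ = ‖y - c‖ := norm_sub_rev _ _
      linarith
    have hle : Real.sqrt (r^2 + ‖p - y‖^2) ≤ Real.sqrt 2 * r := by
      rw [show Real.sqrt 2 * r = Real.sqrt (2 * r^2) by
        rw [Real.sqrt_mul (by norm_num), Real.sqrt_sq hr.le]]
      apply Real.sqrt_le_sqrt
      nlinarith [norm_nonneg (p - y)]
    have hpos : 0 < Real.sqrt (r^2 + ‖p - y‖^2) := by
      apply Real.sqrt_pos.mpr; nlinarith [norm_nonneg (p - y)]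
    exact Real.rpow_le_rpow_of_nonpos hpos hle hs
  refine le_trans ?_ (lintegral_mono_set hsub)
  have hstep : ENNReal.ofReal ((Real.sqrt 2 * r) ^ s) * volume (ball c (r/2))
      ≤ ∫⁻ y in ball c (r/2), ENNReal.ofReal ((Real.sqrt (r^2 + ‖p - y‖^2)) ^ s) := by
    rw [← setLIntegral_const]
    exact setLIntegral_mono' measurableSet_ball hball_le
  refine le_trans (le_of_eq ?_) hstep
  rw [Measure.addHaar_ball _ _ (by linarith : (0:ℝ) ≤ r/2), finrank_euclideanSpace_fin,
    ← ENNReal.ofReal_toReal (measure_ball_lt_top (x := (0 : EuclideanSpace ℝ (Fin m))) (r := 1)).ne,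
    ← ENNReal.ofReal_mul (by positivity), ← mul_assoc,
    ← ENNReal.ofReal_mul (by positivity)]
  congr 1
  have hm1 : ((r/2:ℝ)) ^ m = r ^ ((m:ℝ)) * (2:ℝ) ^ (-(m:ℝ)) := by
    rw [div_pow, ← Real.rpow_natCast r m, ← Real.rpow_natCast (2:ℝ) m,
      Real.rpow_neg (by norm_num), div_eq_mul_inv]
  have hmul : (Real.sqrt 2 * r) ^ s = (Real.sqrt 2) ^ s * r ^ s :=
    Real.mul_rpow (Real.sqrt_nonneg 2) hr.le
  have hr2 : r ^ ((m:ℝ)) * r ^ s = r ^ (-(1:ℝ) - α) := by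
    rw [← Real.rpow_add hr]; congr 1; simp only [hs_def]; ring
  rw [hmul, hm1, ← hr2, ENNReal.toReal_ofReal ENNReal.toReal_nonneg]
  ring

lemma annulus_volume (m : ℕ) (hm : 1 ≤ m) (a b : ℝ) (ha : 0 ≤ a) (hb : 0 ≤ b) :
    volume {x : EuclideanSpace ℝ (Fin m) | a ≤ ‖x‖ ∧ ‖x‖ < b}
      = ENNReal.ofReal (b ^ m - a ^ m) * volume (ball (0 : EuclideanSpace ℝ (Fin m)) 1) := by
  haveI : Nontrivial (EuclideanSpace ℝ (Fin m)) := by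
    apply Module.nontrivial_of_finrank_pos (R := ℝ)
    rw [finrank_euclideanSpace_fin]; omega
  rcases le_or_gt a b with hab | hab
  · have hset : {x : EuclideanSpace ℝ (Fin m) | a ≤ ‖x‖ ∧ ‖x‖ < b}
        = ball (0 : EuclideanSpace ℝ (Fin m)) b \ ball 0 a := by
      ext x
      simp [mem_ball_zero_iff, not_lt, and_comm]
    rw [hset, measure_diff (ball_subset_ball hab) measurableSet_ball.nullMeasurableSet
      measure_ball_lt_top.ne, Measure.addHaar_ball _ _ ha, Measure.addHaar_ball _ _ hb,
      finrank_euclideanSpace_fin,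
      ← ENNReal.sub_mul (fun _ _ => measure_ball_lt_top.ne),
      ENNReal.ofReal_sub _ (by positivity)]
  · have hset : {x : EuclideanSpace ℝ (Fin m) | a ≤ ‖x‖ ∧ ‖x‖ < b} = ∅ := by
      ext x; simp only [Set.mem_setOf_eq, Set.mem_empty_iff_false, iff_false, not_and, not_lt]
      intro h; linarith
    rw [hset]
    have : b ^ m - a ^ m ≤ 0 := by
      have := pow_le_pow_left₀ hb hab.le m
      linarith
    simp [ENNReal.ofReal_eq_zero.mpr this]

open Classical in
/-- The localized triple-integral integrand. -/
noncomputable def PsiF (m : ℕ) (α : ℝ) (u : ℝ → ℝ) (x : ℝ)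
    (x' : EuclideanSpace ℝ (Fin m)) (y : ℝ) : ℝ≥0∞ :=
  if ((-π < x ∧ x < π) ∧ (-π < y ∧ y < π) ∧ u y ≤ ‖x'‖ ∧ ‖x'‖ < u x)
  then ENNReal.ofReal (|x - y| ^ (-(1:ℝ) - α)) else 0

/-- The constant in the half-space bound. -/
noncomputable def c0 (m : ℕ) (α : ℝ) : ℝ :=
  (volume (ball (0 : EuclideanSpace ℝ (Fin m)) 1)).toReal
    * ((2:ℝ) ^ (-(m:ℝ)) * (Real.sqrt 2) ^ (-((m:ℝ)+1) - α))

lemma c0_pos (m : ℕ) (α : ℝ) : 0 < c0 m α := by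
  unfold c0
  have h1 : 0 < (volume (ball (0 : EuclideanSpace ℝ (Fin m)) 1)).toReal :=
    ENNReal.toReal_pos (measure_ball_pos _ _ one_pos).ne' measure_ball_lt_top.ne
  positivity

lemma lhs_eq (m : ℕ) (α : ℝ) (u : ℝ → ℝ) (hu : Measurable u) :
    (∫⁻ x in Set.Ioo (-π) π, ∫⁻ y in Set.Ioo (-π) π,
        ENNReal.ofReal (|u x ^ m - u y ^ m| / |x - y| ^ ((1:ℝ) + α)))
    = 2 * ∫⁻ x in Set.Ioo (-π) π, ∫⁻ y in Set.Ioo (-π) π,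
        ENNReal.ofReal (u x ^ m - u y ^ m) * ENNReal.ofReal (|x - y| ^ (-(1:ℝ) - α)) := by
  set F : ℝ → ℝ → ℝ≥0∞ := fun x y =>
    ENNReal.ofReal (u x ^ m - u y ^ m) * ENNReal.ofReal (|x - y| ^ (-(1:ℝ) - α)) with hF
  have hFm : Measurable (Function.uncurry F) := by
    apply Measurable.mul (f := fun p : ℝ × ℝ => ENNReal.ofReal (u p.1 ^ m - u p.2 ^ m))
      (g := fun p : ℝ × ℝ => ENNReal.ofReal (|p.1 - p.2| ^ (-(1:ℝ) - α)))
    · apply Measurable.ennreal_ofReal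
      fun_prop
    · apply Measurable.ennreal_ofReal
      fun_prop
  have P1 : ∀ x y : ℝ, ENNReal.ofReal (|u x ^ m - u y ^ m| / |x - y| ^ ((1:ℝ) + α))
      = F x y + F y x := by
    intro x y
    have hq : |x - y| ^ (-(1:ℝ) - α) = (|x - y| ^ ((1:ℝ) + α))⁻¹ := by
      rw [show (-(1:ℝ) - α) = -((1:ℝ)+α) by ring, Real.rpow_neg (abs_nonneg _)]
    have habs : |y - x| = |x - y| := abs_sub_comm y x
    simp only [hF, habs, hq, div_eq_mul_inv]
    rw [ENNReal.ofReal_mul (abs_nonneg _)]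
    rcases le_total (u y ^ m) (u x ^ m) with h | h
    · rw [abs_of_nonneg (by linarith),
        ENNReal.ofReal_of_nonpos (by linarith : u y ^ m - u x ^ m ≤ 0), zero_mul, add_zero]
    · rw [abs_of_nonpos (by linarith),
        ENNReal.ofReal_of_nonpos (by linarith : u x ^ m - u y ^ m ≤ 0), zero_mul, zero_add,
        ← neg_sub, neg_neg]
  have hswap : (∫⁻ x in Set.Ioo (-π) π, ∫⁻ y in Set.Ioo (-π) π, F y x)
      = ∫⁻ x in Set.Ioo (-π) π, ∫⁻ y in Set.Ioo (-π) π, F x y :=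
    lintegral_lintegral_swap ((hFm.comp measurable_swap).aemeasurable)
  calc (∫⁻ x in Set.Ioo (-π) π, ∫⁻ y in Set.Ioo (-π) π,
        ENNReal.ofReal (|u x ^ m - u y ^ m| / |x - y| ^ ((1:ℝ) + α)))
      = ∫⁻ x in Set.Ioo (-π) π, ∫⁻ y in Set.Ioo (-π) π, (F x y + F y x) :=
        lintegral_congr fun x => lintegral_congr fun y => P1 x y
    _ = (∫⁻ x in Set.Ioo (-π) π, ∫⁻ y in Set.Ioo (-π) π, F x y)
        + ∫⁻ x in Set.Ioo (-π) π, ∫⁻ y in Set.Ioo (-π) π, F y x := by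
        rw [← lintegral_add_left]
        · apply lintegral_congr fun x => ?_
          rw [← lintegral_add_left]
          exact hFm.comp measurable_prodMk_left
        · exact Measurable.lintegral_prod_right hFm
    _ = 2 * ∫⁻ x in Set.Ioo (-π) π, ∫⁻ y in Set.Ioo (-π) π, F x y := by
        rw [hswap, two_mul]

lemma psiF_measurable (m : ℕ) (α : ℝ) (u : ℝ → ℝ) (hu : Measurable u) :
    Measurable (fun q : ℝ × EuclideanSpace ℝ (Fin m) × ℝ => PsiF m α u q.1 q.2.1 q.2.2) := by
  classical
  unfold PsiF
  apply Measurable.ite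
  · apply MeasurableSet.inter
    · exact (measurableSet_lt measurable_const measurable_fst).inter
        (measurableSet_lt measurable_fst measurable_const)
    apply MeasurableSet.inter
    · exact (measurableSet_lt measurable_const measurable_snd.snd).inter
        (measurableSet_lt measurable_snd.snd measurable_const)
    apply MeasurableSet.inter
    · exact measurableSet_le (hu.comp measurable_snd.snd) measurable_snd.fst.norm
    · exact measurableSet_lt measurable_snd.fst.norm (hu.comp measurable_fst)
  · apply Measurable.ennreal_ofReal
    fun_prop
  · exact measurable_const

lemma B_mul (m : ℕ) (hm : 1 ≤ m) (α : ℝ) (u : ℝ → ℝ) (hu : Measurable u)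
    (hunn : ∀ s, 0 ≤ u s) :
    volume (ball (0 : EuclideanSpace ℝ (Fin m)) 1) *
      (∫⁻ x in Set.Ioo (-π) π, ∫⁻ y in Set.Ioo (-π) π,
        ENNReal.ofReal (u x ^ m - u y ^ m) * ENNReal.ofReal (|x - y| ^ (-(1:ℝ) - α)))
    = ∫⁻ x, ∫⁻ x' : EuclideanSpace ℝ (Fin m), ∫⁻ y, PsiF m α u x x' y := by
  classical
  set B := volume (ball (0 : EuclideanSpace ℝ (Fin m)) 1) with hB
  have hBtop : B ≠ ⊤ := measure_ball_lt_top.ne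
  -- the inner annulus integrand
  set Ann : ℝ → EuclideanSpace ℝ (Fin m) → ℝ → ℝ≥0∞ := fun x x' y =>
    if (u y ≤ ‖x'‖ ∧ ‖x'‖ < u x) then ENNReal.ofReal (|x - y| ^ (-(1:ℝ) - α)) else 0
    with hAnn
  have hAnnMeas : Measurable (fun q : ℝ × EuclideanSpace ℝ (Fin m) × ℝ =>
      Ann q.1 q.2.1 q.2.2) := by
    apply Measurable.ite
    · apply MeasurableSet.inter
      · exact measurableSet_le (hu.comp measurable_snd.snd) measurable_snd.fst.norm
      · exact measurableSet_lt measurable_snd.fst.norm (hu.comp measurable_fst)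
    · apply Measurable.ennreal_ofReal
      fun_prop
    · exact measurable_const
  have key : ∀ x y : ℝ, B * (ENNReal.ofReal (u x ^ m - u y ^ m)
        * ENNReal.ofReal (|x - y| ^ (-(1:ℝ) - α)))
      = ∫⁻ x' : EuclideanSpace ℝ (Fin m), Ann x x' y := by
    intro x y
    have hS : MeasurableSet {x' : EuclideanSpace ℝ (Fin m) | u y ≤ ‖x'‖ ∧ ‖x'‖ < u x} :=
      (measurableSet_le measurable_const measurable_norm).inter
        (measurableSet_lt measurable_norm measurable_const)
    have : (fun x' : EuclideanSpace ℝ (Fin m) => Ann x x' y)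
        = Set.indicator {x' : EuclideanSpace ℝ (Fin m) | u y ≤ ‖x'‖ ∧ ‖x'‖ < u x}
            (fun _ => ENNReal.ofReal (|x - y| ^ (-(1:ℝ) - α))) := by
      funext x'
      simp only [hAnn, Set.indicator_apply, Set.mem_setOf_eq]
    rw [this, lintegral_indicator hS, setLIntegral_const,
      annulus_volume m hm (u y) (u x) (hunn y) (hunn x)]
    ring
  calc B * (∫⁻ x in Set.Ioo (-π) π, ∫⁻ y in Set.Ioo (-π) π,
        ENNReal.ofReal (u x ^ m - u y ^ m) * ENNReal.ofReal (|x - y| ^ (-(1:ℝ) - α)))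
      = ∫⁻ x in Set.Ioo (-π) π, ∫⁻ y in Set.Ioo (-π) π,
          ∫⁻ x' : EuclideanSpace ℝ (Fin m), Ann x x' y := by
        rw [← lintegral_const_mul' _ _ hBtop]
        refine lintegral_congr fun x => ?_
        rw [← lintegral_const_mul' _ _ hBtop]
        exact lintegral_congr fun y => key x y
    _ = ∫⁻ x in Set.Ioo (-π) π, ∫⁻ x' : EuclideanSpace ℝ (Fin m),
          ∫⁻ y in Set.Ioo (-π) π, Ann x x' y := by
        refine lintegral_congr fun x => ?_
        exact lintegral_lintegral_swap
          ((hAnnMeas.comp (measurable_const.prodMk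
            (measurable_snd.prodMk measurable_fst))).aemeasurable)
    _ = ∫⁻ x, ∫⁻ x' : EuclideanSpace ℝ (Fin m), ∫⁻ y, PsiF m α u x x' y := by
        rw [← lintegral_indicator measurableSet_Ioo]
        refine lintegral_congr fun x => ?_
        by_cases hx : x ∈ Set.Ioo (-π) π
        · rw [Set.indicator_of_mem hx]
          refine lintegral_congr fun x' => ?_
          rw [← lintegral_indicator measurableSet_Ioo]
          refine lintegral_congr fun y => ?_
          by_cases hy : y ∈ Set.Ioo (-π) π
          · rw [Set.indicator_of_mem hy]
            simp only [hAnn, PsiF]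
            have hx' : -π < x ∧ x < π := hx
            have hy' : -π < y ∧ y < π := hy
            by_cases hc : u y ≤ ‖x'‖ ∧ ‖x'‖ < u x
            · rw [if_pos hc, if_pos ⟨hx', hy', hc.1, hc.2⟩]
            · rw [if_neg hc, if_neg (by tauto)]
          · rw [Set.indicator_of_notMem hy]
            simp only [PsiF]
            rw [if_neg (by rw [Set.mem_Ioo] at hy; tauto)]
        · rw [Set.indicator_of_notMem hx]
          symm
          simp only [PsiF]
          have : ∀ x' : EuclideanSpace ℝ (Fin m), ∀ y : ℝ, PsiF m α u x x' y = 0 := by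
            intro x' y
            simp only [PsiF]
            rw [if_neg (by rw [Set.mem_Ioo] at hx; tauto)]
          simp only [PsiF] at this
          simp [this]

lemma per_ge (m : ℕ) (hm : 1 ≤ m) (α : ℝ) (hα : 0 < α) (lam : ℝ) (hlam : 0 < lam)
    (K : ℝ × EuclideanSpace ℝ (Fin m) → ℝ) (hK : Measurable K)
    (hKlow : ∀ x : ℝ × EuclideanSpace ℝ (Fin m), x ≠ 0 →
      lam * (Real.sqrt (x.1 ^ 2 + ‖x.2‖ ^ 2)) ^ (-((m : ℝ) + 1) - α) ≤ K x)
    (u : ℝ → ℝ) (hu : Measurable u) (hunn : ∀ s, 0 ≤ u s) :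
    ENNReal.ofReal (lam * c0 m α)
        * (∫⁻ x, ∫⁻ x' : EuclideanSpace ℝ (Fin m), ∫⁻ y, PsiF m α u x x' y)
      ≤ perK K {x : ℝ × EuclideanSpace ℝ (Fin m) | ‖x.2‖ < u x.1} := by
  classical
  have hm0 : 0 < m := hm
  set E : Set (ℝ × EuclideanSpace ℝ (Fin m)) := {x | ‖x.2‖ < u x.1} with hEdef
  set Om : Set (ℝ × EuclideanSpace ℝ (Fin m)) := {x | -π < x.1 ∧ x.1 < π} with hOmdef
  have hE : MeasurableSet E := measurableSet_lt measurable_snd.norm (hu.comp measurable_fst)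
  have hOm : MeasurableSet Om :=
    (measurableSet_lt measurable_const measurable_fst).inter
      (measurableSet_lt measurable_fst measurable_const)
  set HH : (ℝ × EuclideanSpace ℝ (Fin m)) → ℝ → ℝ≥0∞ := fun z y =>
    if ((-π < y ∧ y < π) ∧ u y ≤ ‖z.2‖) then ENNReal.ofReal (|z.1 - y| ^ (-(1:ℝ) - α)) else 0
    with hHHdef
  have hHH : Measurable (Function.uncurry HH) := by
    apply Measurable.ite
    · apply MeasurableSet.inter
      · exact (measurableSet_lt measurable_const measurable_snd).inter
          (measurableSet_lt measurable_snd measurable_const)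
      · exact measurableSet_le (hu.comp measurable_snd) measurable_fst.snd.norm
    · apply Measurable.ennreal_ofReal
      fun_prop
    · exact measurable_const
  set GG : (ℝ × EuclideanSpace ℝ (Fin m)) → ℝ≥0∞ := fun z => ∫⁻ y, HH z y with hGGdef
  have hGG : Measurable GG := Measurable.lintegral_prod_right hHH
  have claim1 : ∀ z ∈ E, ENNReal.ofReal (lam * c0 m α) * GG z
      ≤ ∫⁻ w in Eᶜ, ENNReal.ofReal (K (z - w)) := by
    intro z hz
    -- choose a unit vector e with ⟪z.2, e⟫ = ‖z.2‖
    obtain ⟨e, he1, he2⟩ : ∃ e : EuclideanSpace ℝ (Fin m), ‖e‖ = 1 ∧ ⟪z.2, e⟫ = ‖z.2‖ := by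
      by_cases h0 : z.2 = 0
      · refine ⟨EuclideanSpace.single (⟨0, hm0⟩ : Fin m) (1:ℝ), ?_, ?_⟩
        · rw [EuclideanSpace.norm_single]; norm_num
        · rw [h0]; simp
      · refine ⟨‖z.2‖⁻¹ • z.2, ?_, ?_⟩
        · rw [norm_smul, norm_inv, norm_norm, inv_mul_cancel₀ (norm_ne_zero_iff.mpr h0)]
        · rw [real_inner_smul_right, real_inner_self_eq_norm_sq]
          have : ‖z.2‖ ≠ 0 := norm_ne_zero_iff.mpr h0
          field_simp
    set W : Set (ℝ × EuclideanSpace ℝ (Fin m)) :=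
      {w | ((-π < w.1 ∧ w.1 < π) ∧ u w.1 ≤ ‖z.2‖) ∧ u w.1 ≤ ⟪w.2, e⟫} with hWdef
    have hW : MeasurableSet W := by
      apply MeasurableSet.inter
      · apply MeasurableSet.inter
        · exact (measurableSet_lt measurable_const measurable_fst).inter
            (measurableSet_lt measurable_fst measurable_const)
        · exact measurableSet_le (hu.comp measurable_fst) measurable_const
      · exact measurableSet_le (hu.comp measurable_fst)
          (continuous_snd.inner continuous_const).measurable
    have hWE : W ⊆ Eᶜ := by
      intro w hw
      have h1 : u w.1 ≤ ⟪w.2, e⟫ := hw.2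
      have h2 : ⟪w.2, e⟫ ≤ ‖w.2‖ := by
        have := real_inner_le_norm w.2 e
        rwa [he1, mul_one] at this
      simp only [hEdef, Set.mem_compl_iff, Set.mem_setOf_eq, not_lt]
      linarith
    set g : (ℝ × EuclideanSpace ℝ (Fin m)) → ℝ≥0∞ := fun w =>
      ENNReal.ofReal (lam * Real.sqrt ((z.1 - w.1)^2 + ‖z.2 - w.2‖^2) ^ (-((m:ℝ) + 1) - α))
      with hgdef
    have hg : Measurable g := by
      apply Measurable.ennreal_ofReal
      fun_prop
    have step1 : ∫⁻ w in W, g w ≤ ∫⁻ w in Eᶜ, ENNReal.ofReal (K (z - w)) := by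
      refine le_trans (setLIntegral_mono' hW ?_) (lintegral_mono_set hWE)
      intro w hw
      apply ENNReal.ofReal_le_ofReal
      have hne : z - w ≠ 0 := by
        have hwE : w ∈ Eᶜ := hWE hw
        intro hcontr
        have : z = w := by
          have := sub_eq_zero.mp hcontr; exact this
        rw [this] at hz
        exact hwE hz
      have := hKlow (z - w) hne
      simpa using this
    -- decompose the W-integral via Fubini and bound below with the half-space lemma
    have hSy : ∀ y : ℝ, MeasurableSet {y' : EuclideanSpace ℝ (Fin m) | u y ≤ ⟪y', e⟫} :=
      fun y => measurableSet_le measurable_const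
        (continuous_id.inner continuous_const).measurable
    have step2 : ENNReal.ofReal (lam * c0 m α) * GG z ≤ ∫⁻ w in W, g w := by
      rw [← lintegral_indicator hW, Measure.volume_eq_prod,
        lintegral_prod _ ((hg.indicator hW).aemeasurable)]
      have eq1 : ∀ y : ℝ, (∫⁻ y', W.indicator g (y, y'))
          = if ((-π < y ∧ y < π) ∧ u y ≤ ‖z.2‖) then
              ∫⁻ y' in {y' : EuclideanSpace ℝ (Fin m) | u y ≤ ⟪y', e⟫}, g (y, y') else 0 := by
        intro y
        by_cases h1 : (-π < y ∧ y < π) ∧ u y ≤ ‖z.2‖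
        · rw [if_pos h1, ← lintegral_indicator (hSy y)]
          refine lintegral_congr fun y' => ?_
          simp only [Set.indicator_apply, hWdef, Set.mem_setOf_eq, h1, true_and]
        · rw [if_neg h1]
          have : ∀ y' : EuclideanSpace ℝ (Fin m), W.indicator g (y, y') = 0 := by
            intro y'
            apply Set.indicator_of_notMem
            simp only [hWdef, Set.mem_setOf_eq]
            tauto
          simp [this]
      have ge2 : ∀ y : ℝ,
          (if ((-π < y ∧ y < π) ∧ u y ≤ ‖z.2‖) then
            ENNReal.ofReal lam * ENNReal.ofReal (c0 m α * |z.1 - y| ^ (-(1:ℝ) - α)) else 0)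
          ≤ (if ((-π < y ∧ y < π) ∧ u y ≤ ‖z.2‖) then
              ∫⁻ y' in {y' : EuclideanSpace ℝ (Fin m) | u y ≤ ⟪y', e⟫}, g (y, y') else 0) := by
        intro y
        by_cases h1 : (-π < y ∧ y < π) ∧ u y ≤ ‖z.2‖
        · rw [if_pos h1, if_pos h1]
          have hrw : ∀ y' : EuclideanSpace ℝ (Fin m), g (y, y')
              = ENNReal.ofReal lam * ENNReal.ofReal
                  (Real.sqrt ((z.1 - y)^2 + ‖z.2 - y'‖^2) ^ (-((m:ℝ) + 1) - α)) := by
            intro y'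
            rw [hgdef]
            exact ENNReal.ofReal_mul hlam.le
          calc ENNReal.ofReal lam * ENNReal.ofReal (c0 m α * |z.1 - y| ^ (-(1:ℝ) - α))
              ≤ ENNReal.ofReal lam * ∫⁻ y' in {y' : EuclideanSpace ℝ (Fin m) | u y ≤ ⟪y', e⟫},
                  ENNReal.ofReal
                    (Real.sqrt ((z.1 - y)^2 + ‖z.2 - y'‖^2) ^ (-((m:ℝ) + 1) - α)) := by
                apply mul_le_mul_right
                by_cases hzy : z.1 = y
                · have : |z.1 - y| = 0 := by rw [hzy, sub_self, abs_zero]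
                  rw [this, Real.zero_rpow (by intro h; have := hα; linarith : -(1:ℝ) - α ≠ 0),
                    mul_zero]
                  simp
                · have hr : 0 < |z.1 - y| := abs_pos.mpr (sub_ne_zero.mpr hzy)
                  have hd : u y ≤ ⟪z.2, e⟫ := he2 ▸ h1.2
                  have hhs := halfspace_bound m hm α hα (|z.1 - y|) hr e z.2 he1 (u y) hd
                  have hsq : |z.1 - y| ^ 2 = (z.1 - y)^2 := sq_abs _
                  rw [hsq] at hhs
                  rw [c0, mul_assoc] at *
                  exact le_trans (le_of_eq (by rw [← mul_assoc])) hhs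
            _ = ∫⁻ y' in {y' : EuclideanSpace ℝ (Fin m) | u y ≤ ⟪y', e⟫}, g (y, y') := by
                rw [← lintegral_const_mul' _ _ ENNReal.ofReal_ne_top]
                exact (lintegral_congr fun y' => (hrw y').symm)
        · rw [if_neg h1, if_neg h1]
      calc ENNReal.ofReal (lam * c0 m α) * GG z
          = ∫⁻ y, (if ((-π < y ∧ y < π) ∧ u y ≤ ‖z.2‖) then
              ENNReal.ofReal lam * ENNReal.ofReal (c0 m α * |z.1 - y| ^ (-(1:ℝ) - α)) else 0) := by
            rw [hGGdef]
            rw [← lintegral_const_mul' _ _ ENNReal.ofReal_ne_top]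
            refine lintegral_congr fun y => ?_
            simp only [hHHdef]
            by_cases h1 : (-π < y ∧ y < π) ∧ u y ≤ ‖z.2‖
            · rw [if_pos h1, if_pos h1, ← ENNReal.ofReal_mul hlam.le,
                ← ENNReal.ofReal_mul (mul_nonneg hlam.le (c0_pos m α).le), mul_assoc]
            · rw [if_neg h1, if_neg h1, mul_zero]
        _ ≤ ∫⁻ y, (if ((-π < y ∧ y < π) ∧ u y ≤ ‖z.2‖) then
              ∫⁻ y' in {y' : EuclideanSpace ℝ (Fin m) | u y ≤ ⟪y', e⟫}, g (y, y') else 0) :=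
            lintegral_mono ge2
        _ = ∫⁻ y, ∫⁻ y', W.indicator g (y, y') := (lintegral_congr fun y => (eq1 y).symm)
    exact le_trans step2 step1
  -- now integrate over E ∩ Ω
  have claim2 : ∫⁻ z in E ∩ Om, GG z
      = ∫⁻ x, ∫⁻ x' : EuclideanSpace ℝ (Fin m), ∫⁻ y, PsiF m α u x x' y := by
    rw [← lintegral_indicator (hE.inter hOm), Measure.volume_eq_prod,
      lintegral_prod _ ((hGG.indicator (hE.inter hOm)).aemeasurable)]
    refine lintegral_congr fun x => lintegral_congr fun x' => ?_
    by_cases hmem : (x, x') ∈ E ∩ Om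
    · rw [Set.indicator_of_mem hmem]
      obtain ⟨hmE, hmO⟩ := hmem
      have hx2 : ‖x'‖ < u x := hmE
      have hx1 : -π < x ∧ x < π := hmO
      refine lintegral_congr fun y => ?_
      simp only [hHHdef, PsiF]
      by_cases hc : (-π < y ∧ y < π) ∧ u y ≤ ‖x'‖
      · rw [if_pos hc, if_pos ⟨hx1, hc.1, hc.2, hx2⟩]
      · rw [if_neg hc, if_neg (by tauto)]
    · rw [Set.indicator_of_notMem hmem]
      symm
      have hnot : ¬ (‖x'‖ < u x ∧ (-π < x ∧ x < π)) := by
        intro hcontr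
        exact hmem ⟨hcontr.1, hcontr.2⟩
      have : ∀ y : ℝ, PsiF m α u x x' y = 0 := by
        intro y
        simp only [PsiF]
        rw [if_neg (by tauto)]
      simp [this]
  calc ENNReal.ofReal (lam * c0 m α)
        * (∫⁻ x, ∫⁻ x' : EuclideanSpace ℝ (Fin m), ∫⁻ y, PsiF m α u x x' y)
      = ∫⁻ z in E ∩ Om, ENNReal.ofReal (lam * c0 m α) * GG z := by
        rw [← claim2, lintegral_const_mul' _ _ ENNReal.ofReal_ne_top]
    _ ≤ ∫⁻ z in E ∩ Om, ∫⁻ w in Eᶜ, ENNReal.ofReal (K (z - w)) :=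
        setLIntegral_mono' (hE.inter hOm) fun z hz => claim1 z hz.1
    _ = perK K E := rfl

theorem stmt18 (m : ℕ) (hm : 1 ≤ m) (α : ℝ) (hα : α ∈ Set.Ioo (0:ℝ) 1) :
    ∃ C : ℝ, 0 < C ∧
      ∀ lam : ℝ, 0 < lam →
      ∀ K : ℝ × EuclideanSpace ℝ (Fin m) → ℝ, Measurable K → (∀ x, 0 ≤ K x) →
      (∀ x : ℝ × EuclideanSpace ℝ (Fin m), x ≠ 0 →
        lam * (Real.sqrt (x.1 ^ 2 + ‖x.2‖ ^ 2)) ^ (-((m : ℝ) + 1) - α) ≤ K x) →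
      ∀ u : ℝ → ℝ, Measurable u → (∀ s, 0 ≤ u s) → Function.Periodic u (2 * π) →
      perK K {x : ℝ × EuclideanSpace ℝ (Fin m) | ‖x.2‖ < u x.1} ≠ ⊤ →
      (∫⁻ x in Set.Ioo (-π) π, ∫⁻ y in Set.Ioo (-π) π,
          ENNReal.ofReal (|u x ^ m - u y ^ m| / |x - y| ^ ((1:ℝ) + α))) ≤
        ENNReal.ofReal (C * (1 + (1 / lam) *
          (perK K {x : ℝ × EuclideanSpace ℝ (Fin m) | ‖x.2‖ < u x.1}).toReal)) := by
  have hα1 : 0 < α := hα.1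
  set Bt := (volume (ball (0 : EuclideanSpace ℝ (Fin m)) 1)).toReal with hBtdef
  have hBtpos : 0 < Bt :=
    ENNReal.toReal_pos (measure_ball_pos _ _ one_pos).ne' measure_ball_lt_top.ne
  have hc0 := c0_pos m α
  refine ⟨2 / (c0 m α * Bt), by positivity, ?_⟩
  intro lam hlam K hK hKnn hKlow u hu hunn huper hfin
  set P := (perK K {x : ℝ × EuclideanSpace ℝ (Fin m) | ‖x.2‖ < u x.1}).toReal with hPdef
  have hP0 : 0 ≤ P := ENNReal.toReal_nonneg
  have hperK : perK K {x : ℝ × EuclideanSpace ℝ (Fin m) | ‖x.2‖ < u x.1}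
      = ENNReal.ofReal P := (ENNReal.ofReal_toReal hfin).symm
  set MM := ∫⁻ x, ∫⁻ x' : EuclideanSpace ℝ (Fin m), ∫⁻ y, PsiF m α u x x' y with hMMdef
  set NN := ∫⁻ x in Set.Ioo (-π) π, ∫⁻ y in Set.Ioo (-π) π,
      ENNReal.ofReal (u x ^ m - u y ^ m) * ENNReal.ofReal (|x - y| ^ (-(1:ℝ) - α)) with hNNdef
  have h1 := lhs_eq m α u hu
  have h2 := B_mul m hm α u hu hunn
  have h3 := per_ge m hm α hα1 lam hlam K hK hKlow u hu hunn
  have hlc : 0 < lam * c0 m α := mul_pos hlam hc0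
  have hMMle : MM ≤ ENNReal.ofReal (P / (lam * c0 m α)) := by
    rw [ENNReal.ofReal_div_of_pos hlc,
      ENNReal.le_div_iff_mul_le (Or.inl (ENNReal.ofReal_pos.mpr hlc).ne')
        (Or.inl ENNReal.ofReal_ne_top), mul_comm]
    exact le_trans h3 hperK.le
  have hNNle : NN ≤ ENNReal.ofReal (P / (lam * c0 m α) / Bt) := by
    rw [ENNReal.ofReal_div_of_pos hBtpos,
      ENNReal.le_div_iff_mul_le (Or.inl (ENNReal.ofReal_pos.mpr hBtpos).ne')
        (Or.inl ENNReal.ofReal_ne_top)]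
    have hBeq : ENNReal.ofReal Bt = volume (ball (0 : EuclideanSpace ℝ (Fin m)) 1) :=
      ENNReal.ofReal_toReal measure_ball_lt_top.ne
    rw [hBeq, mul_comm, h2]
    exact hMMle
  calc (∫⁻ x in Set.Ioo (-π) π, ∫⁻ y in Set.Ioo (-π) π,
          ENNReal.ofReal (|u x ^ m - u y ^ m| / |x - y| ^ ((1:ℝ) + α)))
      = 2 * NN := h1
    _ ≤ 2 * ENNReal.ofReal (P / (lam * c0 m α) / Bt) := mul_le_mul_right hNNle 2
    _ ≤ ENNReal.ofReal ((2 / (c0 m α * Bt)) * (1 + (1 / lam) * P)) := by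
        rw [show (2 : ℝ≥0∞) = ENNReal.ofReal 2 by simp, ← ENNReal.ofReal_mul (by norm_num)]
        apply ENNReal.ofReal_le_ofReal
        have key : 2 * (P / (lam * c0 m α) / Bt) = (2 / (c0 m α * Bt)) * ((1/lam) * P) := by ring
        rw [key]
        apply mul_le_mul_of_nonneg_left (by linarith) (by positivity)
end
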